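/- Let f : ℂ × ℂ → ℂ be an entire function of two complex variables such that f(z, conj(z)) = 0 for all z ∈ ℂ. Then f is identically zero on ℂ × ℂ. -/

import Mathlib

open Complex Filter

/-- An entire function on ℂ vanishing on the real line vanishes everywhere. -/
lemma vanish_of_real_zero (g : ℂ → ℂ) (hg : Differentiable ℂ g)
    (h : ∀ r : ℝ, g r = 0) : ∀ z : ℂ, g z = 0 := by
  have han : AnalyticOnNhd ℂ g Set.univ := analyticOnNhd_univ_iff_differentiable.mpr hg
  have hfreq : ∃ᶠ z in nhdsWithin (0 : ℂ) {(0:ℂ)}ᶜ, g z = 0 := by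
    have htend : Tendsto (fun n : ℕ => ((1 / (n + 1) : ℝ) : ℂ)) atTop
        (nhdsWithin (0 : ℂ) {(0:ℂ)}ᶜ) := by
      apply tendsto_nhdsWithin_of_tendsto_nhds_of_eventually_within
      · have : Tendsto (fun n : ℕ => (1 / (n + 1) : ℝ)) atTop (nhds 0) :=
          tendsto_one_div_add_atTop_nhds_zero_nat
        have h2 := (Complex.continuous_ofReal.tendsto 0).comp this
        simp only [Function.comp_def, Complex.ofReal_zero] at h2
        convert h2 using 2
      · filter_upwards with n
        simp only [Set.mem_compl_iff, Set.mem_singleton_iff]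
        intro hc
        have : (1 / (n + 1) : ℝ) = 0 := by exact_mod_cast hc
        have : (n + 1 : ℝ) ≠ 0 := by positivity
        simp_all
    exact htend.frequently (Frequently.of_forall fun n => h _)
  have := han.eqOn_zero_of_preconnected_of_frequently_eq_zero
    isPreconnected_univ (Set.mem_univ (0 : ℂ)) hfreq
  intro z
  exact this (Set.mem_univ z)

theorem stmt_11 (f : ℂ × ℂ → ℂ) (hf : Differentiable ℂ f)
    (h0 : ∀ z : ℂ, f (z, (starRingEnd ℂ) z) = 0) :
    ∀ p : ℂ × ℂ, f p = 0 := by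
  set F : ℂ → ℂ → ℂ := fun x y => f (x + I * y, x - I * y) with hF
  have hdiff1 : ∀ y : ℂ, Differentiable ℂ (fun x => F x y) := by
    intro y
    apply hf.comp
    exact Differentiable.prodMk (differentiable_id.add_const _) (differentiable_id.sub_const _)
  have hdiff2 : ∀ x : ℂ, Differentiable ℂ (fun y => F x y) := by
    intro x
    apply hf.comp
    exact Differentiable.prodMk ((differentiable_const x).add (differentiable_id.const_mul I))
      ((differentiable_const x).sub (differentiable_id.const_mul I))
  have step1 : ∀ y : ℝ, ∀ x : ℂ, F x y = 0 := by
    intro y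
    apply vanish_of_real_zero _ (hdiff1 y)
    intro r
    have hc : (starRingEnd ℂ) ((r : ℂ) + I * y) = (r : ℂ) - I * y := by
      simp [map_add, map_mul, Complex.conj_I, Complex.conj_ofReal]
      ring
    have := h0 ((r : ℂ) + I * y)
    rw [hc] at this
    simpa [hF] using this
  have step2 : ∀ x : ℂ, ∀ y : ℂ, F x y = 0 := by
    intro x
    apply vanish_of_real_zero _ (hdiff2 x)
    intro r
    exact step1 r x
  intro p
  have key := step2 ((p.1 + p.2) / 2) (-I * (p.1 - p.2) / 2)
  have h1 : (p.1 + p.2) / 2 + I * (-I * (p.1 - p.2) / 2) = p.1 := by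
    have : (I : ℂ) * I = -1 := Complex.I_mul_I
    field_simp
    ring_nf
    rw [Complex.I_sq]
    ring
  have h2 : (p.1 + p.2) / 2 - I * (-I * (p.1 - p.2) / 2) = p.2 := by
    field_simp
    ring_nf
    rw [Complex.I_sq]
    ring
  rw [hF] at key
  simp only [h1, h2] at key
  simpa using key
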